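/- Let F be a finitely generated free profinite group of finite rank at least 2, and let N be an open normal subgroup of F. If α is a continuous automorphism of F that restricts to the identity on N, then α is the identity automorphism of F. -/

import Mathlib

set_option linter.unusedSectionVars false
set_option linter.unusedVariables false

/-- `F` is a free profinite group of rank `n`: it is a profinite group together with `n`
topological generators satisfying the universal lifting property with respect to (discrete)
finite groups. -/
def IsFreeProfiniteOfRank (F : Type) [Group F] [TopologicalSpace F] (n : ℕ) : Prop :=
  CompactSpace F ∧ T2Space F ∧ TotallyDisconnectedSpace F ∧
  ∃ x : Fin n → F,
    ∀ (H : Type) [Group H] [Finite H] (g : Fin n → H),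
      ∃! φ : F →* H, (∀ s : Set H, IsOpen (φ ⁻¹' s)) ∧ ∀ i, φ (x i) = g i

namespace StmtTwoAux

/-- The coefficient group. -/
abbrev B (n : ℕ) := Fin n → Multiplicative (ZMod 2)

/-- The module (as a multiplicative group) `Q → B n`. -/
abbrev Mq (Q : Type) (n : ℕ) := Q → B n

variable (Q : Type) [Group Q] (n : ℕ)

/-- Left-translation action of `Q` on `Mq Q n`. -/
def act : Q →* MulAut (Mq Q n) where
  toFun g :=
    { toFun := fun m x => m (g⁻¹ * x)
      invFun := fun m x => m (g * x)
      left_inv := by intro m; funext x; simp [mul_inv_cancel_left]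
      right_inv := by intro m; funext x; simp [inv_mul_cancel_left]
      map_mul' := fun _ _ => rfl }
  map_one' := by
    apply MulEquiv.ext; intro m; funext x; simp
  map_mul' := by
    intro a b
    apply MulEquiv.ext; intro m; funext x
    simp [MulAut.mul_apply, mul_assoc, mul_inv_rev]

@[simp] lemma act_apply (g : Q) (m : Mq Q n) (x : Q) : act Q n g m x = m (g⁻¹ * x) := rfl

variable [DecidableEq Q]

/-- The distinguished "point mass at the identity" elements. -/
def deltaE (i : Fin n) : Mq Q n :=
  Pi.mulSingle (1 : Q) (Pi.mulSingle i (Multiplicative.ofAdd (1 : ZMod 2)))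

lemma act_mulSingle (g h : Q) (b : B n) :
    act Q n g (Pi.mulSingle h b) = Pi.mulSingle (g * h) b := by
  funext x
  simp only [act_apply, Pi.mulSingle_apply]
  congr 1
  exact propext inv_mul_eq_iff_eq_mul

lemma act_deltaE (g : Q) (i : Fin n) :
    act Q n g (deltaE Q n i) =
      Pi.mulSingle g (Pi.mulSingle i (Multiplicative.ofAdd (1 : ZMod 2))) := by
  rw [deltaE, act_mulSingle, mul_one]

end StmtTwoAux

namespace StmtTwoAux
variable (Q : Type) [Group Q] (n : ℕ)
lemma act_act_inv (a : Q) (m : Mq Q n) : act Q n a (act Q n a⁻¹ m) = m := by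
  rw [← MulAut.mul_apply, ← map_mul, mul_inv_cancel, map_one, MulAut.one_apply]
end StmtTwoAux

namespace StmtTwoAux

theorem gadget {Q : Type} [Group Q] [Finite Q] [DecidableEq Q] {n : ℕ} (hn : 2 ≤ n)
    (q : Fin n → Q) (cb : Q) (hcb : cb ≠ 1) (t : Q → Mq Q n) (ht1 : t 1 = 1)
    (hfix : ∀ (g : Q) (i : Fin n),
      act Q n cb (t g * act Q n g (deltaE Q n i) * (t (g * q i))⁻¹)
        = t g * act Q n g (deltaE Q n i) * (t (g * q i))⁻¹) : False := by
  classical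
  haveI : Fintype Q := Fintype.ofFinite Q
  -- the subgroup of `cb`-fixed vectors
  set Tsub : Subgroup (Mq Q n) :=
    { carrier := {m | act Q n cb m = m}
      one_mem' := by simp
      mul_mem' := by
        intro a b ha hb
        simp only [Set.mem_setOf_eq, map_mul] at *
        rw [ha, hb]
      inv_mem' := by
        intro a ha
        simp only [Set.mem_setOf_eq, map_inv] at *
        rw [ha] } with hTsub
  have mem_Tsub : ∀ m : Mq Q n, m ∈ Tsub ↔ act Q n cb m = m := fun m => Iff.rfl
  -- fixed vectors are constant on right cosets of `zpowers cb`
  set Z : Subgroup Q := Subgroup.zpowers cb with hZdef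
  have hconst : ∀ m : Mq Q n, m ∈ Tsub → ∀ z ∈ Z, ∀ x, m (z * x) = m x := by
    intro m hm
    have hcb' : ∀ x, m (cb * x) = m x := by
      intro x
      have h1 : ∀ y, m (cb⁻¹ * y) = m y := fun y => congrFun ((mem_Tsub m).mp hm) y
      have h2 := h1 (cb * x)
      rw [inv_mul_cancel_left] at h2
      exact h2.symm
    let St : Subgroup Q :=
      { carrier := {z | ∀ x, m (z * x) = m x}
        one_mem' := by intro x; simp
        mul_mem' := by
          intro a b ha hb x
          rw [mul_assoc, ha, hb]
        inv_mem' := by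
          intro a ha x
          have := ha (a⁻¹ * x)
          rw [mul_inv_cancel_left] at this
          exact this.symm }
    have hle : Z ≤ St := Subgroup.zpowers_le.mpr hcb'
    intro z hz x
    exact hle hz x
  -- cardinality of Z is at least 2
  have hZcard : 2 ≤ Nat.card Z := by
    have h0 : 0 < Nat.card Z := Nat.card_pos
    have h1 : Nat.card Z ≠ 1 := by
      intro h
      exact hcb (Subgroup.zpowers_eq_bot.mp (Subgroup.card_eq_one.mp h))
    omega
  -- the orbit space
  set O := Quotient (QuotientGroup.rightRel Z) with hO
  have hTcard : Nat.card Tsub ≤ (2 ^ n) ^ Nat.card O := by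
    have hinj : Function.Injective
        (fun (m : Tsub) => (fun o : O => (m : Mq Q n) (Quotient.out o))) := by
      intro m₁ m₂ h
      apply Subtype.ext; funext x
      have hrel : x * (Quotient.out (Quotient.mk (QuotientGroup.rightRel Z) x))⁻¹ ∈ Z :=
        (QuotientGroup.rightRel_apply).mp
          (Quotient.exact (Quotient.out_eq (Quotient.mk (QuotientGroup.rightRel Z) x)))
      set a := Quotient.out (Quotient.mk (QuotientGroup.rightRel Z) x) with ha
      have hxa : x = (x * a⁻¹) * a := by group
      have e1 : (m₁ : Mq Q n) x = (m₁ : Mq Q n) a := by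
        conv_lhs => rw [hxa]
        exact hconst m₁ m₁.2 _ hrel a
      have e2 : (m₂ : Mq Q n) x = (m₂ : Mq Q n) a := by
        conv_lhs => rw [hxa]
        exact hconst m₂ m₂.2 _ hrel a
      rw [e1, e2]
      exact congrFun h (Quotient.mk (QuotientGroup.rightRel Z) x)
    calc Nat.card Tsub ≤ Nat.card (O → B n) := Nat.card_le_card_of_injective _ hinj
      _ = Nat.card (B n) ^ Nat.card O := Nat.card_fun
      _ = (2 ^ n) ^ Nat.card O := by
          congr 1
          rw [show Nat.card (B n) = Nat.card (Multiplicative (ZMod 2)) ^ Nat.card (Fin n) from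
            Nat.card_fun]
          rw [Nat.card_congr Multiplicative.toAdd, Nat.card_zmod, Nat.card_eq_fintype_card,
            Fintype.card_fin]
  -- Lagrange
  have hlag : Nat.card Q = Nat.card (Q ⧸ Z) * Nat.card Z :=
    Subgroup.card_eq_card_quotient_mul_card_subgroup Z
  have hOQ : Nat.card O = Nat.card (Q ⧸ Z) :=
    Nat.card_congr (QuotientGroup.quotientRightRelEquivQuotientLeftRel Z)
  have hQO : 2 * Nat.card O ≤ Nat.card Q := by
    calc 2 * Nat.card O ≤ Nat.card Z * Nat.card O := Nat.mul_le_mul_right _ hZcard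
      _ = Nat.card Q := by rw [hlag, hOQ, mul_comm]
  -- the generated subgroups
  set u : Q → Fin n → Mq Q n :=
    fun g i => t g * act Q n g (deltaE Q n i) * (t (g * q i))⁻¹ with hu
  set S0 : Subgroup (Mq Q n) := Subgroup.closure {m | ∃ g i, u g i = m} with hS0def
  set D : Subgroup (Mq Q n) := Subgroup.closure (Set.range t) with hDdef
  have hS0T : S0 ≤ Tsub := by
    apply (Subgroup.closure_le _).mpr
    rintro m ⟨g, i, rfl⟩
    exact hfix g i
  -- all point masses lie in S0 ⊔ D
  have hmass : ∀ (g : Q) (i : Fin n),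
      Pi.mulSingle g (Pi.mulSingle i (Multiplicative.ofAdd (1 : ZMod 2))) ∈ S0 ⊔ D := by
    intro g i
    have h1 : u g i ∈ S0 := Subgroup.subset_closure ⟨g, i, rfl⟩
    have h2 : t g ∈ D := Subgroup.subset_closure ⟨g, rfl⟩
    have h3 : t (g * q i) ∈ D := Subgroup.subset_closure ⟨g * q i, rfl⟩
    have key : Pi.mulSingle g (Pi.mulSingle i (Multiplicative.ofAdd (1 : ZMod 2)))
        = (t g)⁻¹ * u g i * t (g * q i) := by
      rw [← act_deltaE]
      simp only [hu]
      group
    rw [key]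
    exact mul_mem (mul_mem (inv_mem (Subgroup.mem_sup_right h2)) (Subgroup.mem_sup_left h1))
      (Subgroup.mem_sup_right h3)
  have hBmem : ∀ (g : Q) (bb : B n), (Pi.mulSingle g bb : Mq Q n) ∈ S0 ⊔ D := by
    intro g bb
    have hdec : (Pi.mulSingle g bb : Mq Q n)
        = ∏ i : Fin n, (Pi.mulSingle g (Pi.mulSingle i (bb i)) : Mq Q n) := by
      have hmp : (MonoidHom.mulSingle (fun _ : Q => B n) g)
            (∏ i : Fin n, Pi.mulSingle i (bb i))
          = ∏ i : Fin n, (MonoidHom.mulSingle (fun _ : Q => B n) g)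
              (Pi.mulSingle i (bb i)) :=
        map_prod _ _ _
      rw [Finset.univ_prod_mulSingle bb] at hmp
      simpa [MonoidHom.mulSingle_apply] using hmp
    rw [hdec]
    apply Subgroup.prod_mem
    intro i _
    have hv := (by decide : ∀ w : Multiplicative (ZMod 2),
      w = 1 ∨ w = Multiplicative.ofAdd 1) (bb i)
    rcases hv with hv | hv
    · rw [hv, Pi.mulSingle_one, Pi.mulSingle_one]
      exact one_mem _
    · rw [hv]
      exact hmass g i
  have htop : ∀ m : Mq Q n, m ∈ S0 ⊔ D := by
    intro m
    have hm2 : (∏ g : Q, Pi.mulSingle g (m g)) ∈ S0 ⊔ D :=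
      Subgroup.prod_mem _ (fun g _ => hBmem g (m g))
    rwa [Finset.univ_prod_mulSingle] at hm2
  -- counting
  have hMS : Nat.card (Mq Q n) ≤ Nat.card S0 * Nat.card D := by
    have hsurj : Function.Surjective
        (fun p : S0 × D => ((p.1 : Mq Q n) * (p.2 : Mq Q n))) := by
      intro m
      obtain ⟨a, ha, b, hb, hab⟩ := Subgroup.mem_sup.mp (htop m)
      exact ⟨(⟨a, ha⟩, ⟨b, hb⟩), hab⟩
    calc Nat.card (Mq Q n) ≤ Nat.card (S0 × D) := Nat.card_le_card_of_surjective _ hsurj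
      _ = Nat.card S0 * Nat.card D := Nat.card_prod _ _
  -- bound on the cardinality of D
  have hsq : ∀ m : Mq Q n, m * m = 1 := by
    intro m; funext x j
    exact (by decide : ∀ w : Multiplicative (ZMod 2), w * w = 1) (m x j)
  have hpowmod : ∀ (m : Mq Q n) (k : ℕ), m ^ k = m ^ (k % 2) := by
    intro m k
    conv_lhs => rw [show k = 2 * (k / 2) + k % 2 from (Nat.div_add_mod k 2).symm]
    rw [pow_add, pow_mul]
    rw [show m ^ 2 = 1 from by rw [pow_two]; exact hsq m]
    rw [one_pow, one_mul]
  set θ : Multiplicative (Q → ZMod 2) →* Mq Q n :=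
    { toFun := fun ε => ∏ g : Q, t g ^ (Multiplicative.toAdd ε g).val
      map_one' := by
        apply Finset.prod_eq_one
        intro g _
        show t g ^ (Multiplicative.toAdd (1 : Multiplicative (Q → ZMod 2)) g).val = 1
        rw [toAdd_one]
        show t g ^ (0 : ZMod 2).val = 1
        rw [ZMod.val_zero, pow_zero]
      map_mul' := by
        intro a b
        show ∏ g : Q, _ = (∏ g : Q, _) * ∏ g : Q, _
        rw [← Finset.prod_mul_distrib]
        apply Finset.prod_congr rfl
        intro g _
        rw [toAdd_mul]
        show t g ^ (Multiplicative.toAdd a g + Multiplicative.toAdd b g).val = _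
        rw [ZMod.val_add, ← hpowmod, pow_add] } with hθ
  have hDle : D ≤ θ.range := by
    apply (Subgroup.closure_le _).mpr
    rintro m ⟨g₀, rfl⟩
    refine ⟨Multiplicative.ofAdd ((Pi.single g₀ (1 : ZMod 2) : Q → ZMod 2)), ?_⟩
    show ∏ g : Q, t g ^ (((Pi.single g₀ (1 : ZMod 2) : Q → ZMod 2)) g).val = t g₀
    rw [Finset.prod_eq_single g₀]
    · rw [Pi.single_eq_same, ZMod.val_one, pow_one]
    · intro g _ hg
      rw [Pi.single_eq_of_ne hg, ZMod.val_zero, pow_zero]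
    · intro h; exact absurd (Finset.mem_univ _) h
  have hθupd : ∀ ε : Q → ZMod 2,
      θ (Multiplicative.ofAdd ε) = θ (Multiplicative.ofAdd (Function.update ε 1 0)) := by
    intro ε
    show ∏ g : Q, _ = ∏ g : Q, _
    apply Finset.prod_congr rfl
    intro g _
    by_cases hg : g = 1
    · subst hg
      rw [ht1, one_pow, one_pow]
    · show t g ^ (ε g).val = t g ^ ((Function.update ε 1 0) g).val
      rw [Function.update_of_ne hg]
  have hDcard : 2 * Nat.card D ≤ 2 ^ Nat.card Q := by
    have hsurj : Function.Surjective
        (fun ε : {ε : Q → ZMod 2 // ε 1 = 0} =>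
          (⟨θ (Multiplicative.ofAdd ε.1), ⟨Multiplicative.ofAdd ε.1, rfl⟩⟩ : θ.range)) := by
      rintro ⟨y, a, rfl⟩
      refine ⟨⟨Function.update (Multiplicative.toAdd a) 1 0, Function.update_self _ _ _⟩, ?_⟩
      apply Subtype.ext
      show θ (Multiplicative.ofAdd (Function.update (Multiplicative.toAdd a) 1 0)) = θ a
      rw [← hθupd (Multiplicative.toAdd a)]
      rfl
    have h1 : Nat.card D ≤ Nat.card θ.range := Subgroup.card_le_of_le hDle
    have h2 : Nat.card θ.range ≤ Nat.card {ε : Q → ZMod 2 // ε 1 = 0} :=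
      Nat.card_le_card_of_surjective _ hsurj
    have e : (Q → ZMod 2) ≃ {ε : Q → ZMod 2 // ε 1 = 0} × ZMod 2 :=
      { toFun := fun ε => (⟨Function.update ε 1 0, Function.update_self _ _ _⟩, ε 1)
        invFun := fun p => Function.update p.1.1 1 p.2
        left_inv := by
          intro ε
          simp only []
          rw [Function.update_idem, Function.update_eq_self]
        right_inv := by
          rintro ⟨⟨p, hp⟩, v⟩
          refine Prod.ext (Subtype.ext ?_) ?_
          · show Function.update (Function.update p 1 v) 1 0 = p
            rw [Function.update_idem, ← hp, Function.update_eq_self]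
          · exact Function.update_self _ _ _ }
    have e2 : Nat.card (Q → ZMod 2) = Nat.card {ε : Q → ZMod 2 // ε 1 = 0} * 2 := by
      rw [Nat.card_congr e, Nat.card_prod, Nat.card_zmod]
    have e3 : Nat.card (Q → ZMod 2) = 2 ^ Nat.card Q := by
      rw [Nat.card_fun, Nat.card_zmod]
    calc 2 * Nat.card D ≤ 2 * Nat.card {ε : Q → ZMod 2 // ε 1 = 0} := by
          apply Nat.mul_le_mul_left
          exact le_trans h1 h2
      _ = 2 ^ Nat.card Q := by rw [mul_comm, ← e2, e3]
  -- final counting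
  have hM : Nat.card (Mq Q n) = 2 ^ (n * Nat.card Q) := by
    rw [show Nat.card (Mq Q n) = Nat.card (B n) ^ Nat.card Q from Nat.card_fun]
    rw [show Nat.card (B n) = Nat.card (Multiplicative (ZMod 2)) ^ Nat.card (Fin n) from
      Nat.card_fun]
    rw [Nat.card_congr Multiplicative.toAdd, Nat.card_zmod, Nat.card_eq_fintype_card,
      Fintype.card_fin, ← pow_mul]
  have hS0card : Nat.card S0 ≤ (2 ^ n) ^ Nat.card O :=
    le_trans (Subgroup.card_le_of_le hS0T) hTcard
  have main : 2 ^ (n * Nat.card Q + 1) ≤ 2 ^ (n * Nat.card O + Nat.card Q) := by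
    calc 2 ^ (n * Nat.card Q + 1) = Nat.card (Mq Q n) * 2 := by rw [hM, pow_succ]
      _ ≤ (Nat.card S0 * Nat.card D) * 2 := Nat.mul_le_mul_right _ hMS
      _ = Nat.card S0 * (2 * Nat.card D) := by ring
      _ ≤ ((2 ^ n) ^ Nat.card O) * 2 ^ Nat.card Q :=
          Nat.mul_le_mul hS0card hDcard
      _ = 2 ^ (n * Nat.card O + Nat.card Q) := by rw [← pow_mul, ← pow_add]
  have hexp : n * Nat.card Q + 1 ≤ n * Nat.card O + Nat.card Q :=
    (Nat.pow_le_pow_iff_right (by norm_num)).mp main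
  -- derive the contradiction
  have hQpos : 1 ≤ Nat.card Q := Nat.card_pos
  obtain ⟨d, hd⟩ : ∃ d, Nat.card Q = Nat.card O + d := ⟨Nat.card Q - Nat.card O, by omega⟩
  have had : Nat.card O ≤ d := by omega
  have h5 : n * d + 1 ≤ Nat.card O + d := by
    have : n * Nat.card O + n * d + 1 ≤ n * Nat.card O + (Nat.card O + d) := by
      rw [← Nat.mul_add, ← hd]
      exact hexp
    omega
  have h6 : 2 * d ≤ n * d := Nat.mul_le_mul_right d hn
  have h7 : n * d + 1 ≤ 2 * d := by omega
  omega

end StmtTwoAux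


open StmtTwoAux

/-- A continuous automorphism of a free profinite group of finite rank `≥ 2` restricting to the
identity on an open normal subgroup is the identity. -/
theorem stmt_2 (F : Type) [Group F] [TopologicalSpace F] [IsTopologicalGroup F]
    (n : ℕ) (hn : 2 ≤ n) (hF : IsFreeProfiniteOfRank F n)
    (N : Subgroup F) [N.Normal] (hNopen : IsOpen (N : Set F))
    (α : F ≃* F) (hα : Continuous α) (hα' : Continuous α.symm)
    (hid : ∀ x ∈ N, α x = x) :
    ∀ x : F, α x = x := by
  have hNn : N.Normal := inferInstance
  obtain ⟨hcomp, ht2, htd, x, hx⟩ := hF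
  haveI := hcomp; haveI := ht2; haveI := htd
  classical
  by_contra hne
  push_neg at hne
  obtain ⟨x₀, hx₀⟩ := hne
  set c : F := x₀⁻¹ * α x₀ with hc
  have hc1 : c ≠ 1 := by
    intro h
    apply hx₀
    rw [hc] at h
    rw [inv_mul_eq_one] at h
    exact h.symm
  have hcomm : ∀ f ∈ N, c * f = f * c := by
    intro f hf
    have h1 : α (x₀ * f * x₀⁻¹) = x₀ * f * x₀⁻¹ := by
      apply hid
      have := hNn.conj_mem f hf x₀
      simpa [mul_assoc] using this
    have h2 : α (x₀ * f * x₀⁻¹) = α x₀ * f * (α x₀)⁻¹ := by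
      rw [map_mul, map_mul, map_inv, hid f hf]
    have h3 : x₀ * f * x₀⁻¹ = α x₀ * f * (α x₀)⁻¹ := by rw [← h1, h2]
    have h4 : α x₀ * f = x₀ * f * x₀⁻¹ * α x₀ := by
      rw [h3]
      group
    rw [hc]
    calc x₀⁻¹ * α x₀ * f = x₀⁻¹ * (α x₀ * f) := by group
      _ = x₀⁻¹ * (x₀ * f * x₀⁻¹ * α x₀) := by rw [h4]
      _ = f * (x₀⁻¹ * α x₀) := by group
  -- find a small open normal subgroup
  have hUopen : IsOpen ((N : Set F) ∩ {c}ᶜ) := hNopen.inter isOpen_compl_singleton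
  have hUmem : (1 : F) ∈ (N : Set F) ∩ {c}ᶜ := by
    refine ⟨N.one_mem, ?_⟩
    simp only [Set.mem_compl_iff, Set.mem_singleton_iff]
    exact fun h => hc1 h.symm
  obtain ⟨W, hWclopen, hW1, hWsub⟩ := compact_exists_isClopen_in_isOpen hUopen hUmem
  obtain ⟨Vn, hVnW⟩ :=
    IsTopologicalGroup.exist_openNormalSubgroup_sub_clopen_nhds_of_one hWclopen hW1
  set V : Subgroup F := Vn.toSubgroup with hVdef
  haveI hVnormal : V.Normal := Vn.isNormal'
  have hVopen : IsOpen (V : Set F) := Vn.toOpenSubgroup.isOpen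
  have hVsub : ∀ v ∈ V, v ∈ N := fun v hv => (hWsub (hVnW hv)).1
  have hcV : c ∉ V := fun hcv => (hWsub (hVnW hcv)).2 rfl
  haveI hQfin : Finite (F ⧸ V) := Subgroup.quotient_finite_of_isOpen V hVopen
  haveI : DecidableEq (F ⧸ V) := Classical.decEq _
  set mk : F →* F ⧸ V := QuotientGroup.mk' V with hmkdef
  set qq : Fin n → F ⧸ V := fun i => mk (x i) with hqq
  haveI hHfin : Finite (SemidirectProduct (Mq (F ⧸ V) n) (F ⧸ V) (act (F ⧸ V) n)) := by
    apply Finite.of_surjective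
      (fun p : (Mq (F ⧸ V) n) × (F ⧸ V) =>
        (⟨p.1, p.2⟩ : SemidirectProduct (Mq (F ⧸ V) n) (F ⧸ V) (act (F ⧸ V) n)))
    intro h
    exact ⟨(h.left, h.right), by cases h; rfl⟩
  obtain ⟨ψ, ⟨hψc, hψx⟩, hψuniq⟩ :=
    hx (SemidirectProduct (Mq (F ⧸ V) n) (F ⧸ V) (act (F ⧸ V) n))
      (fun i => ⟨deltaE (F ⧸ V) n i, qq i⟩)
  -- mk has open preimages
  have hmkc : ∀ s : Set (F ⧸ V), IsOpen (mk ⁻¹' s) := by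
    intro s
    have heq : mk ⁻¹' s = ⋃ f ∈ mk ⁻¹' s, (fun z => f * z) '' (V : Set F) := by
      ext z
      constructor
      · intro hz
        exact Set.mem_biUnion hz ⟨1, V.one_mem, mul_one z⟩
      · intro hz
        rw [Set.mem_iUnion] at hz
        obtain ⟨f, hz⟩ := hz
        rw [Set.mem_iUnion] at hz
        obtain ⟨hf, hz⟩ := hz
        obtain ⟨v, hv, rfl⟩ := hz
        have : mk (f * v) = mk f := by
          rw [map_mul, show mk v = 1 from (QuotientGroup.eq_one_iff v).mpr hv, mul_one]
        show mk (f * v) ∈ s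
        rw [this]
        exact hf
    rw [heq]
    exact isOpen_biUnion fun f _ => (Homeomorph.mulLeft f).isOpen_image.mpr hVopen
  -- rightHom ∘ ψ = mk
  obtain ⟨ρ, ⟨hρc, hρx⟩, hρuniq⟩ := hx (F ⧸ V) qq
  have e1 : SemidirectProduct.rightHom.comp ψ = ρ := by
    apply hρuniq
    constructor
    · intro s
      have hpre : ⇑(SemidirectProduct.rightHom.comp ψ) ⁻¹' s
          = ⇑ψ ⁻¹' (⇑SemidirectProduct.rightHom ⁻¹' s) := rfl
      rw [hpre]
      exact hψc _
    · intro i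
      rw [MonoidHom.comp_apply, hψx i]
      rfl
  have e2 : mk = ρ := hρuniq mk ⟨hmkc, fun i => rfl⟩
  have hπψ : ∀ f : F, (ψ f).right = mk f := by
    intro f
    have h := congrArg (fun h : F →* F ⧸ V => h f) (e1.trans e2.symm)
    exact h
  -- a section of mk
  have hmksurj : Function.Surjective mk := QuotientGroup.mk'_surjective V
  choose y₀ hy₀ using fun g : F ⧸ V => hmksurj g
  set y : (F ⧸ V) → F := Function.update y₀ (1 : F ⧸ V) (1 : F) with hydef
  have hysec : ∀ g : F ⧸ V, mk (y g) = g := by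
    intro g
    by_cases hg : g = 1
    · subst hg
      rw [hydef]
      show mk (Function.update y₀ 1 1 1) = 1
      rw [Function.update_self]
      exact map_one mk
    · rw [hydef]
      show mk (Function.update y₀ 1 1 g) = g
      rw [Function.update_of_ne hg]
      exact hy₀ g
  set t : (F ⧸ V) → Mq (F ⧸ V) n := fun g => (ψ (y g)).left with htdef
  have ht1 : t 1 = 1 := by
    show (ψ (y 1)).left = 1
    rw [show y 1 = 1 from Function.update_self _ _ _, map_one]
    rfl
  -- structure of ψ on the section
  have hψy : ∀ g : F ⧸ V, ψ (y g)
      = (⟨t g, g⟩ : SemidirectProduct (Mq (F ⧸ V) n) (F ⧸ V) (act (F ⧸ V) n)) := by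
    intro g
    have h1 : (ψ (y g)).right = g := (hπψ (y g)).trans (hysec g)
    calc ψ (y g) = ⟨(ψ (y g)).left, (ψ (y g)).right⟩ := rfl
      _ = ⟨t g, g⟩ := by rw [h1]
  -- the fixed-point property
  have hcb : mk c ≠ 1 := fun h => hcV ((QuotientGroup.eq_one_iff c).mp h)
  have hfix : ∀ (g : F ⧸ V) (i : Fin n),
      act (F ⧸ V) n (mk c)
          (t g * act (F ⧸ V) n g (deltaE (F ⧸ V) n i) * (t (g * qq i))⁻¹)
        = t g * act (F ⧸ V) n g (deltaE (F ⧸ V) n i) * (t (g * qq i))⁻¹ := by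
    intro g i
    set f : F := y g * x i * (y (g * qq i))⁻¹ with hfdef
    have hmkf : mk f = 1 := by
      rw [hfdef, map_mul, map_mul, map_inv, hysec, hysec]
      show g * qq i * (g * qq i)⁻¹ = 1
      group
    have hfV : f ∈ V := (QuotientGroup.eq_one_iff f).mp hmkf
    have hfN : f ∈ N := hVsub f hfV
    have hψf : ψ f = ψ (y g) * ψ (x i) * (ψ (y (g * qq i)))⁻¹ := by
      rw [hfdef, map_mul, map_mul, map_inv]
    have hleft : (ψ f).left
        = t g * act (F ⧸ V) n g (deltaE (F ⧸ V) n i) * (t (g * qq i))⁻¹ := by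
      rw [hψf, hψy g, hψy (g * qq i), hψx i]
      rw [SemidirectProduct.mul_left, SemidirectProduct.mul_left,
        SemidirectProduct.inv_left, SemidirectProduct.mul_right]
      show t g * act (F ⧸ V) n g (deltaE (F ⧸ V) n i)
          * act (F ⧸ V) n (g * qq i) (act (F ⧸ V) n (g * qq i)⁻¹ (t (g * qq i))⁻¹)
        = _
      rw [act_act_inv]
    have hfr : (ψ f).right = 1 := (hπψ f).trans hmkf
    have hcom : ψ c * ψ f = ψ f * ψ c := by
      rw [← map_mul, ← map_mul, hcomm f hfN]
    have hl := congrArg SemidirectProduct.left hcom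
    rw [SemidirectProduct.mul_left, SemidirectProduct.mul_left, hfr, map_one,
      MulAut.one_apply, hπψ c] at hl
    have hfixf : act (F ⧸ V) n (mk c) (ψ f).left = (ψ f).left := by
      calc act (F ⧸ V) n (mk c) (ψ f).left
          = ((ψ c).left)⁻¹ * ((ψ c).left * act (F ⧸ V) n (mk c) (ψ f).left) := by group
        _ = ((ψ c).left)⁻¹ * ((ψ f).left * (ψ c).left) := by rw [hl]
        _ = (ψ f).left := by
            rw [mul_comm ((ψ f).left) ((ψ c).left)]
            group
    rw [hleft] at hfixf
    exact hfixf
  exact StmtTwoAux.gadget hn qq (mk c) hcb t ht1 hfix
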